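/- Let B be an n×n Hermitian positive definite complex matrix with diagonal normalization B̂ and potential Γ(B) = tr(B̂^{-1}) − n. Then off(B̂) ≤ Γ(B) · (√(1 + Γ(B)/4) + √(Γ(B)/4))², where off(M) := Σ_{i≠j} |m_{ij}|². -/

import Mathlib

open Matrix
open scoped ComplexOrder

noncomputable section

/-- `D_B^{1/2}`: the diagonal matrix whose entries are the square roots of the
diagonal entries of `B`. -/
def sqrtDiag {n : ℕ} (B : Matrix (Fin n) (Fin n) ℂ) : Matrix (Fin n) (Fin n) ℂ :=
  Matrix.diagonal fun i => (Real.sqrt (B i i).re : ℂ)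

/-- The diagonal normalization `B̂ = D_B^{-1/2} B D_B^{-1/2}`. -/
def hatM {n : ℕ} (B : Matrix (Fin n) (Fin n) ℂ) : Matrix (Fin n) (Fin n) ℂ :=
  (sqrtDiag B)⁻¹ * B * (sqrtDiag B)⁻¹

/-- The potential function `Γ(B) = tr(B̂⁻¹) − n` (a real number for Hermitian
positive definite `B`). -/
def Gamma {n : ℕ} (B : Matrix (Fin n) (Fin n) ℂ) : ℝ :=
  (Matrix.trace ((hatM B)⁻¹)).re - n

/-- `off(M) = Σ_{i ≠ j} |m_{ij}|²`, the squared Frobenius distance to the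
nearest diagonal matrix. -/
def off {n : ℕ} (M : Matrix (Fin n) (Fin n) ℂ) : ℝ :=
  ∑ p ∈ (Finset.univ : Finset (Fin n)).offDiag, ‖M p.1 p.2‖ ^ 2

/-! ### Auxiliary lemmas -/

private lemma aux_key_real {l g a b : ℝ} (hl : 0 < l) (ha : a ^ 2 = 1 + g / 4)
    (hb : b ^ 2 = g / 4) (ha0 : 0 ≤ a) (hb0 : 0 ≤ b) (h : (l - 1) ^ 2 ≤ g * l) :
    l ≤ (a + b) ^ 2 := by
  by_contra hc
  push_neg at hc
  have h2 : 0 < l - (a - b) ^ 2 := by nlinarith [mul_nonneg ha0 hb0]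
  nlinarith [mul_pos (sub_pos.mpr hc) h2]

variable {n : ℕ} (B : Matrix (Fin n) (Fin n) ℂ) (hB : B.PosDef)

include hB in
private lemma aux_diag_pos (i : Fin n) : 0 < B i i := by
  have hne : (Pi.single i 1 : Fin n → ℂ) ≠ 0 := by
    intro h
    have := congrFun h i
    simp at this
  have := hB.dotProduct_mulVec_pos hne
  simpa [Matrix.mulVec_single, dotProduct, Pi.single_apply, apply_ite] using this

include hB in
private lemma aux_diag_re_pos (i : Fin n) : 0 < (B i i).re :=
  (Complex.lt_def.mp (aux_diag_pos B hB i)).1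

include hB in
private lemma aux_diag_eq_re (i : Fin n) : B i i = ((B i i).re : ℂ) := by
  have hi := (Complex.lt_def.mp (aux_diag_pos B hB i)).2
  exact Complex.ext rfl (by simp [← hi])

include hB in
private lemma aux_sqrt_diag_ne (i : Fin n) : (Real.sqrt (B i i).re : ℂ) ≠ 0 := by
  simp [Real.sqrt_ne_zero', aux_diag_re_pos B hB i]

include hB in
private lemma aux_sqrtDiag_inv : (sqrtDiag B)⁻¹
    = Matrix.diagonal fun i => ((Real.sqrt (B i i).re : ℂ))⁻¹ := by
  apply Matrix.inv_eq_right_inv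
  rw [sqrtDiag, Matrix.diagonal_mul_diagonal]
  have h1 : ∀ i : Fin n, (Real.sqrt (B i i).re : ℂ) * ((Real.sqrt (B i i).re : ℂ))⁻¹ = 1 :=
    fun i => mul_inv_cancel₀ (aux_sqrt_diag_ne B hB i)
  simp only [Pi.mul_apply, h1, Matrix.diagonal_one]

include hB in
private lemma aux_hatM_apply (i j : Fin n) :
    hatM B i j = ((Real.sqrt (B i i).re : ℂ))⁻¹ * B i j * ((Real.sqrt (B j j).re : ℂ))⁻¹ := by
  rw [hatM, aux_sqrtDiag_inv B hB]
  simp [Matrix.diagonal_mul, Matrix.mul_diagonal, mul_comm, mul_assoc]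

include hB in
private lemma aux_hatM_diag (i : Fin n) : hatM B i i = 1 := by
  have h := aux_diag_re_pos B hB i
  have hs := aux_sqrt_diag_ne B hB i
  rw [aux_hatM_apply B hB i i]
  field_simp
  rw [aux_diag_eq_re B hB i]
  norm_cast
  rw [Real.sq_sqrt h.le]

include hB in
private lemma aux_hatM_posDef : (hatM B).PosDef := by
  set c : Fin n → ℂ := fun i => ((Real.sqrt (B i i).re : ℂ))⁻¹ with hc
  have hcne : ∀ i, c i ≠ 0 := fun i => inv_ne_zero (aux_sqrt_diag_ne B hB i)
  have hC : (sqrtDiag B)⁻¹ = Matrix.diagonal c := aux_sqrtDiag_inv B hB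
  have hCH : (Matrix.diagonal c)ᴴ = Matrix.diagonal c := by
    have hsc : star c = c := funext fun i => by
      simp [hc, Pi.star_apply, ← Complex.ofReal_inv]
    rw [Matrix.diagonal_conjTranspose, hsc]
  refine Matrix.posDef_iff_dotProduct_mulVec.mpr ⟨?_, ?_⟩
  · show (hatM B)ᴴ = hatM B
    rw [hatM, hC]
    simp only [Matrix.conjTranspose_mul, hCH, hB.isHermitian.eq]
    rw [Matrix.mul_assoc]
  · intro x hx
    have hy : Matrix.diagonal c *ᵥ x ≠ 0 := by
      intro h
      apply hx
      ext i
      have := congrFun h i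
      simp [Matrix.mulVec_diagonal] at this
      rcases this with h1 | h1
      · exact absurd h1 (hcne i)
      · exact h1
    have key : star x ⬝ᵥ (hatM B) *ᵥ x
        = star (Matrix.diagonal c *ᵥ x) ⬝ᵥ B *ᵥ (Matrix.diagonal c *ᵥ x) := by
      rw [Matrix.star_mulVec, hCH, hatM, hC, ← Matrix.mulVec_mulVec, ← Matrix.mulVec_mulVec,
        Matrix.dotProduct_mulVec (star x)]
    rw [key]
    exact hB.dotProduct_mulVec_pos hy

/-- For Hermitian positive definite `B`,
`off(B̂) ≤ Γ(B)·(√(1 + Γ(B)/4) + √(Γ(B)/4))²`. -/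
theorem off_hat_le_of_gamma {n : ℕ} (B : Matrix (Fin n) (Fin n) ℂ) (hB : B.PosDef) :
    off (hatM B) ≤ Gamma B * (Real.sqrt (1 + Gamma B / 4) + Real.sqrt (Gamma B / 4)) ^ 2 := by
  classical
  have hA : (hatM B).PosDef := aux_hatM_posDef B hB
  set A : Matrix (Fin n) (Fin n) ℂ := hatM B with hAdef
  have hdiag : ∀ i, A i i = 1 := fun i => aux_hatM_diag B hB i
  have hH : A.IsHermitian := hA.1
  set lam : Fin n → ℝ := hH.eigenvalues with hlam
  set U : Matrix (Fin n) (Fin n) ℂ :=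
    (IsHermitian.eigenvectorUnitary hH : Matrix (Fin n) (Fin n) ℂ) with hUdef
  have hU1 : star U * U = 1 := by
    have := (IsHermitian.eigenvectorUnitary hH).2
    rw [Matrix.mem_unitaryGroup_iff'] at this
    exact this
  have hU2 : U * star U = 1 := by
    have := (IsHermitian.eigenvectorUnitary hH).2
    rw [Matrix.mem_unitaryGroup_iff] at this
    exact this
  have htr : ∀ M : Matrix (Fin n) (Fin n) ℂ,
      Matrix.trace (U * M * star U) = Matrix.trace M := by
    intro M
    rw [Matrix.trace_mul_cycle, hU1, Matrix.one_mul]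
  have hspec : A = U * Matrix.diagonal (fun i => (lam i : ℂ)) * star U := by
    exact hH.spectral_theorem
  have hlpos : ∀ i, 0 < lam i := fun i => hA.eigenvalues_pos i
  have hAinv : A⁻¹ = U * Matrix.diagonal (fun i => ((lam i : ℂ))⁻¹) * star U := by
    apply Matrix.inv_eq_right_inv
    rw [hspec]
    have e1 : (U * Matrix.diagonal (fun i => (lam i : ℂ)) * star U) *
        (U * Matrix.diagonal (fun i => ((lam i : ℂ))⁻¹) * star U)
        = U * Matrix.diagonal (fun i => (lam i : ℂ)) * (star U * U) *
          Matrix.diagonal (fun i => ((lam i : ℂ))⁻¹) * star U := by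
      simp only [Matrix.mul_assoc]
    rw [e1, hU1, Matrix.mul_one, Matrix.mul_assoc U, Matrix.diagonal_mul_diagonal]
    have e2 : ∀ i : Fin n, (lam i : ℂ) * ((lam i : ℂ))⁻¹ = 1 := fun i =>
      mul_inv_cancel₀ (Complex.ofReal_ne_zero.mpr (ne_of_gt (hlpos i)))
    simp only [e2, Matrix.diagonal_one, Matrix.mul_one]
    exact hU2
  have hA2 : A * A = U * Matrix.diagonal (fun i => ((lam i ^ 2 : ℝ) : ℂ)) * star U := by
    rw [hspec]
    have e1 : (U * Matrix.diagonal (fun i => (lam i : ℂ)) * star U) *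
        (U * Matrix.diagonal (fun i => (lam i : ℂ)) * star U)
        = U * Matrix.diagonal (fun i => (lam i : ℂ)) * (star U * U) *
          Matrix.diagonal (fun i => (lam i : ℂ)) * star U := by
      simp only [Matrix.mul_assoc]
    rw [e1, hU1, Matrix.mul_one, Matrix.mul_assoc U, Matrix.diagonal_mul_diagonal]
    congr 2
    funext i
    push_cast
    ring
  have htrA : Matrix.trace A = ∑ i, (lam i : ℂ) := by
    rw [hspec, htr, Matrix.trace_diagonal]
  have htrAinv : (Matrix.trace A⁻¹).re = ∑ i, (lam i)⁻¹ := by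
    rw [hAinv, htr, Matrix.trace_diagonal, Complex.re_sum]
    simp
  have htrA2 : (Matrix.trace (A * A)).re = ∑ i, lam i ^ 2 := by
    rw [hA2, htr, Matrix.trace_diagonal, Complex.re_sum]
    simp [← Complex.ofReal_pow]
  -- sum of eigenvalues is n
  have htrn : Matrix.trace A = (n : ℂ) := by
    rw [Matrix.trace]
    simp only [Matrix.diag_apply, hdiag]
    simp
  have hsum : ∑ i, lam i = n := by
    have h0 := congrArg Complex.re (htrA.symm.trans htrn)
    rw [Complex.re_sum] at h0
    simpa using h0
  -- Gamma in terms of eigenvalues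
  have hg : Gamma B = (∑ i, (lam i)⁻¹) - n := by
    rw [Gamma, ← hAdef, htrAinv]
  -- Frobenius computation
  have hstep : ∀ i j : Fin n, (A i j * A j i).re = ‖A i j‖ ^ 2 := by
    intro i j
    have hji : A j i = (starRingEnd ℂ) (A i j) := by
      conv_lhs => rw [← hH.eq]
      rfl
    rw [hji, Complex.mul_conj]
    simp [Complex.normSq_eq_norm_sq, ← Complex.ofReal_pow]
  have hfrob : ∑ i, ∑ j, ‖A i j‖ ^ 2 = ∑ i, lam i ^ 2 := by
    rw [← htrA2, Matrix.trace]
    simp only [Matrix.diag_apply, Matrix.mul_apply]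
    rw [Complex.re_sum]
    refine Finset.sum_congr rfl fun i _ => ?_
    rw [Complex.re_sum]
    exact Finset.sum_congr rfl fun j _ => (hstep i j).symm
  -- off in terms of eigenvalues
  have hoff : off A = (∑ i, lam i ^ 2) - n := by
    have hsplit : ∑ p ∈ (Finset.univ ×ˢ Finset.univ : Finset (Fin n × Fin n)), ‖A p.1 p.2‖ ^ 2
        = (∑ p ∈ (Finset.univ : Finset (Fin n)).diag, ‖A p.1 p.2‖ ^ 2) + off A := by
      rw [off, ← Finset.sum_union (Finset.disjoint_diag_offDiag _),
        Finset.diag_union_offDiag]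
    have hprod : ∑ p ∈ (Finset.univ ×ˢ Finset.univ : Finset (Fin n × Fin n)), ‖A p.1 p.2‖ ^ 2
        = ∑ i, ∑ j, ‖A i j‖ ^ 2 := by
      rw [Finset.sum_product]
    have hdiagsum : ∑ p ∈ (Finset.univ : Finset (Fin n)).diag, ‖A p.1 p.2‖ ^ 2
        = (n : ℝ) := by
      rw [Finset.sum_diag]
      simp [hdiag]
    rw [hprod, hfrob, hdiagsum] at hsplit
    linarith
  -- the real analysis finale
  set g : ℝ := Gamma B with hgdef
  have hginv : ∑ i, (lam i)⁻¹ = n + g := by rw [hg]; ring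
  have hGsum : ∑ i, (lam i - 1) ^ 2 / lam i = g := by
    have e : ∀ i : Fin n, (lam i - 1) ^ 2 / lam i = (lam i - 2) + (lam i)⁻¹ := by
      intro i
      have h0 : lam i ≠ 0 := ne_of_gt (hlpos i)
      field_simp
      ring
    rw [Finset.sum_congr rfl fun i _ => e i, Finset.sum_add_distrib, Finset.sum_sub_distrib,
      hsum, hginv, Finset.sum_const, Finset.card_univ, Fintype.card_fin]
    ring
  have hnn : ∀ i : Fin n, 0 ≤ (lam i - 1) ^ 2 / lam i := fun i =>
    div_nonneg (sq_nonneg _) (hlpos i).le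
  have hg0 : 0 ≤ g := hGsum ▸ Finset.sum_nonneg fun i _ => hnn i
  have hterm : ∀ i : Fin n, (lam i - 1) ^ 2 / lam i ≤ g := fun i =>
    hGsum ▸ Finset.single_le_sum (fun j _ => hnn j) (Finset.mem_univ i)
  set a : ℝ := Real.sqrt (1 + g / 4) with hadef
  set b : ℝ := Real.sqrt (g / 4) with hbdef
  have ha2 : a ^ 2 = 1 + g / 4 := Real.sq_sqrt (by linarith)
  have hb2 : b ^ 2 = g / 4 := Real.sq_sqrt (by linarith)
  have hlr : ∀ i : Fin n, lam i ≤ (a + b) ^ 2 := fun i =>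
    aux_key_real (hlpos i) ha2 hb2 (Real.sqrt_nonneg _) (Real.sqrt_nonneg _)
      ((div_le_iff₀ (hlpos i)).mp (hterm i))
  have hoff2 : off A = ∑ i, (lam i - 1) ^ 2 := by
    rw [hoff]
    have : ∑ i, (lam i - 1) ^ 2 = (∑ i, lam i ^ 2) - 2 * (∑ i, lam i) + n := by
      rw [Finset.sum_congr rfl fun i (_ : i ∈ Finset.univ) =>
        show (lam i - 1) ^ 2 = lam i ^ 2 - 2 * lam i + 1 by ring]
      rw [Finset.sum_add_distrib, Finset.sum_sub_distrib, ← Finset.mul_sum,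
        Finset.sum_const, Finset.card_univ, Fintype.card_fin]
      simp
    rw [this, hsum]
    ring
  calc off A = ∑ i, (lam i - 1) ^ 2 := hoff2
    _ = ∑ i, lam i * ((lam i - 1) ^ 2 / lam i) := by
        refine Finset.sum_congr rfl fun i _ => ?_
        rw [mul_comm, div_mul_cancel₀ _ (ne_of_gt (hlpos i))]
    _ ≤ ∑ i, (a + b) ^ 2 * ((lam i - 1) ^ 2 / lam i) :=
        Finset.sum_le_sum fun i _ => mul_le_mul_of_nonneg_right (hlr i) (hnn i)
    _ = (a + b) ^ 2 * g := by rw [← Finset.mul_sum, hGsum]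
    _ = g * (a + b) ^ 2 := mul_comm _ _

end
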